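/- Let Q be a connected Dynkin quiver (type A, D, or E) and a ≥ 2 an integer. The repetition quiver ZQ admits a combinatorial a-th root of the Auslander–Reiten translation τ (an automorphism F with F^a = τ^{-1}) if and only if a = 2 and Q is of type A_n with n even. -/

import Mathlib

/-!
# Statement 7

Let `Q` be a connected Dynkin quiver (type `A`, `D` or `E`, with a fixed orientation, as
allowed by the context) and `a ≥ 2`.  The repetition quiver `ℤQ` admits a combinatorial
`a`-th root of the Auslander–Reiten translation — an automorphism `F` of `ℤQ` (a bijection
of vertices preserving the arrows and commuting with the translation `τ`) with
`F^a = τ⁻¹` — if and only if `a = 2` and `Q` is of type `A_n` with `n` even.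
-/

/-- The simply-laced Dynkin types: `A n` (`n ≥ 1` vertices), `D n` (`n ≥ 4` vertices),
`E 6`, `E 7`, `E 8`. -/
inductive DynkinType : Type
  | A : ℕ → DynkinType
  | D : ℕ → DynkinType
  | E6 : DynkinType
  | E7 : DynkinType
  | E8 : DynkinType

namespace DynkinType

/-- Validity of the parameters. -/
def Valid : DynkinType → Prop
  | A n => 1 ≤ n
  | D n => 4 ≤ n
  | _ => True

/-- The number of vertices. -/
def card : DynkinType → ℕ
  | A n => n
  | D n => n
  | E6 => 6
  | E7 => 7
  | E8 => 8

/-- The arrow relation of a fixed orientation of each Dynkin diagram, on vertices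
`0, …, card − 1`:
* type `A n`: the linear quiver `0 → 1 → ⋯ → n−1`;
* type `D n`: the chain `0 → 1 → ⋯ → n−2` together with the fork arrow `n−3 → n−1`;
* types `E m` (`m = 6,7,8`): the chain `0 → ⋯ → m−2` together with the branch `2 → m−1`. -/
def arrow (Δ : DynkinType) (u v : Fin Δ.card) : Prop :=
  match Δ with
  | A _ => (v : ℕ) = (u : ℕ) + 1
  | D n => ((v : ℕ) = (u : ℕ) + 1 ∧ (v : ℕ) ≤ n - 2) ∨ ((u : ℕ) = n - 3 ∧ (v : ℕ) = n - 1)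
  | E6 => ((v : ℕ) = (u : ℕ) + 1 ∧ (v : ℕ) ≤ 4) ∨ ((u : ℕ) = 2 ∧ (v : ℕ) = 5)
  | E7 => ((v : ℕ) = (u : ℕ) + 1 ∧ (v : ℕ) ≤ 5) ∨ ((u : ℕ) = 2 ∧ (v : ℕ) = 6)
  | E8 => ((v : ℕ) = (u : ℕ) + 1 ∧ (v : ℕ) ≤ 6) ∨ ((u : ℕ) = 2 ∧ (v : ℕ) = 7)

end DynkinType

/-- The adjacency of the repetition quiver `ℤQ` of a quiver with arrow relation `arr` :
arrows `(p,u) → (p,v)` and `(p,v) → (p+1,u)` for each arrow `u → v` of `Q`. -/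
def zqAdj {V : Type*} (arr : V → V → Prop) : (ℤ × V) → (ℤ × V) → Prop :=
  fun z w => (w.1 = z.1 ∧ arr z.2 w.2) ∨ (w.1 = z.1 + 1 ∧ arr w.2 z.2)

/-- Any automorphism of `ℤQ` commuting with `τ` whose `a`-th power is `τ⁻¹` induces an
injective map `σ` on the vertices of `Q`, preserving edges up to direction, with
`σ^a = id` and a weight function `g` whose sums over `σ`-orbit segments of length `a`
are all `1`. -/
lemma zq_root_extract {V : Type*} (arr : V → V → Prop) (a : ℕ)
    (e : (ℤ × V) ≃ (ℤ × V))
    (hadj : ∀ z w, zqAdj arr z w ↔ zqAdj arr (e z) (e w))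
    (htau : ∀ z : ℤ × V, e (z.1 - 1, z.2) = ((e z).1 - 1, (e z).2))
    (hpow : ∀ z : ℤ × V, e^[a] z = (z.1 + 1, z.2)) :
    ∃ (σ : V → V) (g : V → ℤ),
      Function.Injective σ ∧
      (∀ u v, arr u v → arr (σ u) (σ v) ∨ arr (σ v) (σ u)) ∧
      (∀ v, σ^[a] v = v) ∧
      (∀ v, ∑ i ∈ Finset.range a, g (σ^[i] v) = 1) := by
  set σ : V → V := fun v => (e (0, v)).2 with hσdef
  set g : V → ℤ := fun v => (e (0, v)).1 with hgdef
  have he : ∀ (p : ℤ) (v : V), e (p, v) = (p + g v, σ v) := by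
    intro p v
    induction p using Int.induction_on with
    | zero => simp [hσdef, hgdef]
    | succ p ih =>
      have h := htau ((p : ℤ) + 1, v)
      simp only [add_sub_cancel_right] at h
      rw [ih, Prod.ext_iff] at h
      obtain ⟨h1, h2⟩ := h
      rw [Prod.ext_iff]
      dsimp only at h1 h2 ⊢
      exact ⟨by linarith, h2.symm⟩
    | pred p ih =>
      have h := htau (-(p : ℤ), v)
      rw [ih] at h
      rw [Prod.ext_iff] at h ⊢
      obtain ⟨h1, h2⟩ := h
      dsimp only at h1 h2 ⊢
      exact ⟨by rw [h1]; ring, h2⟩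
  have hinj : Function.Injective σ := by
    intro v w hvw
    have h1 : e (g w - g v, v) = e (0, w) := by
      rw [he, he, hvw]; ring_nf
    have := e.injective h1
    exact (Prod.ext_iff.mp this).2
  have hiter : ∀ (j : ℕ) (p : ℤ) (v : V),
      e^[j] (p, v) = (p + ∑ i ∈ Finset.range j, g (σ^[i] v), σ^[j] v) := by
    intro j
    induction j with
    | zero => intro p v; simp
    | succ j ih =>
      intro p v
      rw [Function.iterate_succ_apply', ih, he, Finset.sum_range_succ,
        Function.iterate_succ_apply']
      rw [Prod.ext_iff]
      exact ⟨by ring, rfl⟩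
  refine ⟨σ, g, hinj, ?_, ?_, ?_⟩
  · intro u v h
    have hz : zqAdj arr (0, u) (0, v) := Or.inl ⟨rfl, h⟩
    have := (hadj _ _).mp hz
    rw [he, he] at this
    rcases this with ⟨_, h'⟩ | ⟨_, h'⟩
    · exact Or.inl h'
    · exact Or.inr h'
  · intro v
    have := hpow (0, v)
    rw [hiter] at this
    exact (Prod.ext_iff.mp this).2
  · intro v
    have := hpow (0, v)
    rw [hiter] at this
    have h1 := (Prod.ext_iff.mp this).1
    simpa using h1

/-- An injective edge-preserving map fixes the unique branch vertex. -/
lemma branch_fix {V : Type*} (arr : V → V → Prop) (σ : V → V)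
    (hinj : Function.Injective σ)
    (harr : ∀ u v, arr u v → arr (σ u) (σ v) ∨ arr (σ v) (σ u))
    (b x y z : V) (hxy : x ≠ y) (hxz : x ≠ z) (hyz : y ≠ z)
    (hx : arr b x ∨ arr x b) (hy : arr b y ∨ arr y b) (hz : arr b z ∨ arr z b)
    (huniq : ∀ v x y z : V, x ≠ y → x ≠ z → y ≠ z →
      (arr v x ∨ arr x v) → (arr v y ∨ arr y v) → (arr v z ∨ arr z v) → v = b) :
    σ b = b := by
  have hS : ∀ u v, (arr u v ∨ arr v u) → (arr (σ u) (σ v) ∨ arr (σ v) (σ u)) := by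
    rintro u v (h | h)
    exacts [harr u v h, (harr v u h).symm]
  exact huniq (σ b) (σ x) (σ y) (σ z) (fun h => hxy (hinj h)) (fun h => hxz (hinj h))
    (fun h => hyz (hinj h)) (hS _ _ hx) (hS _ _ hy) (hS _ _ hz)

/-- In type `D`, the branch vertex `n-3` is fixed. -/
lemma D_fix (n : ℕ) (hn : 4 ≤ n) (σ : Fin n → Fin n) (hinj : Function.Injective σ)
    (harr : ∀ u v : Fin n,
      (((v:ℕ) = (u:ℕ) + 1 ∧ (v:ℕ) ≤ n - 2) ∨ ((u:ℕ) = n - 3 ∧ (v:ℕ) = n - 1)) →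
      ((((σ v:ℕ) = (σ u:ℕ) + 1 ∧ (σ v:ℕ) ≤ n - 2) ∨ ((σ u:ℕ) = n - 3 ∧ (σ v:ℕ) = n - 1)) ∨
       (((σ u:ℕ) = (σ v:ℕ) + 1 ∧ (σ u:ℕ) ≤ n - 2) ∨ ((σ v:ℕ) = n - 3 ∧ (σ u:ℕ) = n - 1)))) :
    σ ⟨n - 3, by omega⟩ = ⟨n - 3, by omega⟩ := by
  apply branch_fix (fun u v : Fin n =>
      (((v:ℕ) = (u:ℕ) + 1 ∧ (v:ℕ) ≤ n - 2) ∨ ((u:ℕ) = n - 3 ∧ (v:ℕ) = n - 1)))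
    σ hinj harr ⟨n - 3, by omega⟩ ⟨n - 4, by omega⟩ ⟨n - 2, by omega⟩
    ⟨n - 1, by omega⟩
  · intro h; simp only [Fin.mk.injEq] at h; omega
  · intro h; simp only [Fin.mk.injEq] at h; omega
  · intro h; simp only [Fin.mk.injEq] at h; omega
  · exact Or.inr (Or.inl ⟨by simp only [Fin.val_mk]; omega, by simp only [Fin.val_mk]; omega⟩)
  · exact Or.inl (Or.inl ⟨by simp only [Fin.val_mk]; omega, by simp only [Fin.val_mk]; omega⟩)
  · exact Or.inl (Or.inr ⟨rfl, rfl⟩)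
  · intro v x y z hxy hxz hyz hx hy hz
    have hv := v.isLt
    have hx' := x.isLt
    have hy' := y.isLt
    have hz' := z.isLt
    replace hxy := Fin.val_ne_of_ne hxy
    replace hxz := Fin.val_ne_of_ne hxz
    replace hyz := Fin.val_ne_of_ne hyz
    apply Fin.ext
    simp only [Fin.val_mk] at hx hy hz ⊢
    omega

/-- In type `E`, the branch vertex `2` is fixed. -/
lemma E_fix (k c t : ℕ) (hk : 6 ≤ k) (hc : c = k - 2) (ht : t = k - 1)
    (σ : Fin k → Fin k) (hinj : Function.Injective σ)
    (harr : ∀ u v : Fin k,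
      (((v:ℕ) = (u:ℕ) + 1 ∧ (v:ℕ) ≤ c) ∨ ((u:ℕ) = 2 ∧ (v:ℕ) = t)) →
      ((((σ v:ℕ) = (σ u:ℕ) + 1 ∧ (σ v:ℕ) ≤ c) ∨ ((σ u:ℕ) = 2 ∧ (σ v:ℕ) = t)) ∨
       (((σ u:ℕ) = (σ v:ℕ) + 1 ∧ (σ u:ℕ) ≤ c) ∨ ((σ v:ℕ) = 2 ∧ (σ u:ℕ) = t)))) :
    σ ⟨2, by omega⟩ = ⟨2, by omega⟩ := by
  apply branch_fix (fun u v : Fin k =>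
      (((v:ℕ) = (u:ℕ) + 1 ∧ (v:ℕ) ≤ c) ∨ ((u:ℕ) = 2 ∧ (v:ℕ) = t)))
    σ hinj harr ⟨2, by omega⟩ ⟨1, by omega⟩ ⟨3, by omega⟩ ⟨t, by omega⟩
  · intro h; simp only [Fin.mk.injEq] at h; omega
  · intro h; simp only [Fin.mk.injEq] at h; omega
  · intro h; simp only [Fin.mk.injEq] at h; omega
  · exact Or.inr (Or.inl ⟨rfl, by simp only [Fin.val_mk]; omega⟩)
  · exact Or.inl (Or.inl ⟨rfl, by simp only [Fin.val_mk]; omega⟩)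
  · exact Or.inl (Or.inr ⟨rfl, rfl⟩)
  · intro v x y z hxy hxz hyz hx hy hz
    have hv := v.isLt
    have hx' := x.isLt
    have hy' := y.isLt
    have hz' := z.isLt
    replace hxy := Fin.val_ne_of_ne hxy
    replace hxz := Fin.val_ne_of_ne hxz
    replace hyz := Fin.val_ne_of_ne hyz
    apply Fin.ext
    simp only [Fin.val_mk] at hx hy hz ⊢
    omega

/-- The type `A` analysis: `σ` must be the reversal, forcing `n` even and `a = 2`. -/
lemma A_case (n a : ℕ) (hn : 1 ≤ n) (ha : 2 ≤ a)
    (σ : Fin n → Fin n) (g : Fin n → ℤ)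
    (hinj : Function.Injective σ)
    (harr : ∀ u v : Fin n, (v : ℕ) = (u : ℕ) + 1 →
      ((σ v : ℕ) = (σ u : ℕ) + 1) ∨ ((σ u : ℕ) = (σ v : ℕ) + 1))
    (hfix : ∀ v, σ^[a] v = v)
    (hsum : ∀ v, ∑ i ∈ Finset.range a, g (σ^[i] v) = 1)
    (noFix : ∀ v, σ v ≠ v) :
    a = 2 ∧ Even n := by
  rcases Nat.lt_or_ge n 2 with h1 | h2
  · exfalso
    have hn1 : n = 1 := by omega
    subst hn1
    exact noFix 0 (Subsingleton.elim _ _)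
  obtain ⟨s, hs⟩ : ∃ s : ℕ → ℕ, ∀ (i : ℕ) (h : i < n), s i = ((σ ⟨i, h⟩ : Fin n) : ℕ) :=
    ⟨fun i => if h : i < n then ((σ ⟨i, h⟩ : Fin n) : ℕ) else 0, fun i h => dif_pos h⟩
  have sb : ∀ (i : ℕ), i < n → s i < n := by
    intro i h; rw [hs i h]; exact (σ _).isLt
  have sinj : ∀ i j, i < n → j < n → s i = s j → i = j := by
    intro i j hi hj hij
    rw [hs i hi, hs j hj] at hij
    have := hinj (Fin.ext hij)
    exact congrArg Fin.val this
  have hstep : ∀ i, i + 1 < n → (s (i + 1) = s i + 1 ∨ s i = s (i + 1) + 1) := by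
    intro i h
    have := harr ⟨i, by omega⟩ ⟨i + 1, h⟩ rfl
    rw [hs i (by omega), hs (i + 1) h]
    exact this
  have noFixs : ∀ i (h : i < n), s i ≠ i := by
    intro i h hsi
    exact noFix ⟨i, h⟩ (Fin.ext (by rw [← hs i h, hsi]))
  rcases hstep 0 h2 with hup | hdn
  · exfalso
    have hstep' : ∀ i, i + 1 < n → s (i + 1) = s i + 1 := by
      intro i
      induction i with
      | zero => intro _; exact hup
      | succ i ih =>
        intro h
        rcases hstep (i + 1) h with h' | h'
        · exact h'
        · exfalso
          have h3 := ih (by omega)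
          have h4 : s (i + 1 + 1) = s i := by omega
          have := sinj _ _ (by omega) (by omega) h4
          omega
    have hall : ∀ i, i < n → s i = s 0 + i := by
      intro i
      induction i with
      | zero => intro _; rfl
      | succ i ih =>
        intro h
        rw [hstep' i h, ih (by omega)]
        omega
    have h0 : s 0 = 0 := by
      have := hall (n - 1) (by omega)
      have := sb (n - 1) (by omega)
      omega
    exact noFixs 0 (by omega) h0
  · have hstep' : ∀ i, i + 1 < n → s i = s (i + 1) + 1 := by
      intro i
      induction i with
      | zero => intro _; exact hdn
      | succ i ih =>
        intro h
        rcases hstep (i + 1) h with h' | h'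
        · exfalso
          have h3 := ih (by omega)
          have h4 : s (i + 1 + 1) = s i := by omega
          have := sinj _ _ (by omega) (by omega) h4
          omega
        · exact h'
    have hall : ∀ i, i < n → s i + i = s 0 := by
      intro i
      induction i with
      | zero => intro _; rfl
      | succ i ih =>
        intro h
        have := hstep' i h
        have := ih (by omega)
        omega
    have h0 : s 0 = n - 1 := by
      have := hall (n - 1) (by omega)
      have := sb (n - 1) (by omega)
      have := sb 0 (by omega)
      omega
    have hsval : ∀ i, i < n → s i = n - 1 - i := by
      intro i h
      have := hall i h
      omega
    have heven : Even n := by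
      rcases Nat.even_or_odd n with he | ho
      · exact he
      · exfalso
        obtain ⟨c, hc⟩ := ho
        have hlt : c < n := by omega
        have := hsval c hlt
        exact noFixs c hlt (by omega)
    refine ⟨?_, heven⟩
    have hz0 : (0 : ℕ) < n := by omega
    have hz1 : n - 1 < n := by omega
    have hσ0 : σ ⟨0, hz0⟩ = ⟨n - 1, hz1⟩ := by
      apply Fin.ext
      rw [← hs 0 hz0]
      simpa using hsval 0 hz0
    have hσ1 : σ ⟨n - 1, hz1⟩ = ⟨0, hz0⟩ := by
      apply Fin.ext
      rw [← hs (n - 1) hz1]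
      have := hsval (n - 1) hz1
      simpa using (by omega : s (n - 1) = 0)
    have hit : ∀ b : ℕ, σ^[2 * b] ⟨0, hz0⟩ = ⟨0, hz0⟩ ∧ σ^[2 * b + 1] ⟨0, hz0⟩ = ⟨n - 1, hz1⟩ := by
      intro b
      induction b with
      | zero => simpa using hσ0
      | succ b ih =>
        have h1 : σ^[2 * (b + 1)] ⟨0, hz0⟩ = ⟨0, hz0⟩ := by
          rw [show 2 * (b + 1) = (2 * b + 1) + 1 by ring, Function.iterate_succ_apply', ih.2, hσ1]
        exact ⟨h1, by rw [Function.iterate_succ_apply', h1, hσ0]⟩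
    rcases Nat.even_or_odd a with hae | hao
    · obtain ⟨b, hb⟩ := hae
      have hb' : a = 2 * b := by omega
      have hsum2 : ∀ c : ℕ, ∑ i ∈ Finset.range (2 * c), g (σ^[i] ⟨0, hz0⟩)
          = (c : ℤ) * (g ⟨0, hz0⟩ + g ⟨n - 1, hz1⟩) := by
        intro c
        induction c with
        | zero => simp
        | succ c ih =>
          rw [show 2 * (c + 1) = (2 * c) + 1 + 1 by ring, Finset.sum_range_succ,
            Finset.sum_range_succ, ih, (hit c).1, (hit c).2]
          push_cast
          ring
      have h := hsum ⟨0, hz0⟩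
      rw [hb', hsum2 b] at h
      have hdvd : (b : ℤ) ∣ 1 := ⟨_, h.symm⟩
      have := Int.le_of_dvd one_pos hdvd
      omega
    · exfalso
      obtain ⟨b, hb⟩ := hao
      have := hfix ⟨0, hz0⟩
      rw [hb, (hit b).2] at this
      have := congrArg Fin.val this
      simp only [Fin.mk.injEq] at this ⊢
      omega

lemma A_back (n m : ℕ) (hn : 1 ≤ n) (hm : n = m + m) (hm1 : 1 ≤ m) :
    (∃ e : (ℤ × Fin n) ≃ (ℤ × Fin n),
      (∀ z w, zqAdj (fun u v : Fin n => (v : ℕ) = (u : ℕ) + 1) z w ↔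
        zqAdj (fun u v : Fin n => (v : ℕ) = (u : ℕ) + 1) (e z) (e w)) ∧
      (∀ z : ℤ × Fin n, e (z.1 - 1, z.2) = ((e z).1 - 1, (e z).2)) ∧
      (∀ z : ℤ × Fin n, e^[2] z = (z.1 + 1, z.2))) := by
  have hrev : ∀ i : Fin n, n - 1 - (i : ℕ) < n := by
    intro i; have := i.isLt; omega
  refine ⟨⟨fun z => (z.1 + ((z.2 : ℕ) : ℤ) + 1 - m, ⟨n - 1 - (z.2 : ℕ), hrev z.2⟩),
          fun z => (z.1 + ((z.2 : ℕ) : ℤ) - m, ⟨n - 1 - (z.2 : ℕ), hrev z.2⟩),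
          ?_, ?_⟩, ?_, ?_, ?_⟩
  · rintro ⟨p, i⟩
    have hi : (i : ℕ) < n := i.isLt
    refine Prod.ext_iff.mpr ⟨?_, ?_⟩
    · dsimp only
      try simp only [Fin.val_mk]
      push_cast
      omega
    · dsimp only
      apply Fin.ext
      try simp only [Fin.val_mk]
      omega
  · rintro ⟨p, i⟩
    have hi : (i : ℕ) < n := i.isLt
    refine Prod.ext_iff.mpr ⟨?_, ?_⟩
    · dsimp only
      try simp only [Fin.val_mk]
      push_cast
      omega
    · dsimp only
      apply Fin.ext
      try simp only [Fin.val_mk]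
      omega
  · rintro ⟨p, i⟩ ⟨q, j⟩
    have hi : (i : ℕ) < n := i.isLt
    have hj : (j : ℕ) < n := j.isLt
    simp only [zqAdj, Equiv.coe_fn_mk, Fin.val_mk]
    constructor
    · rintro (⟨h1, h2⟩ | ⟨h1, h2⟩)
      · right
        subst h1
        constructor
        · push_cast; omega
        · omega
      · left
        subst h1
        constructor
        · push_cast; omega
        · omega
    · rintro (⟨h1, h2⟩ | ⟨h1, h2⟩)
      · right
        have h1' : (q : ℤ) + (j : ℕ) = p + (i : ℕ) := by push_cast at h1 ⊢; omega
        constructor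
        · omega
        · omega
      · left
        have h1' : (q : ℤ) + (j : ℕ) = p + (i : ℕ) + 1 := by push_cast at h1 ⊢; omega
        constructor
        · omega
        · omega
  · rintro ⟨p, i⟩
    refine Prod.ext_iff.mpr ⟨?_, rfl⟩
    simp only [Equiv.coe_fn_mk]
    ring
  · rintro ⟨p, i⟩
    have hi : (i : ℕ) < n := i.isLt
    have h2 : ∀ (E : (ℤ × Fin n) ≃ (ℤ × Fin n)) (z : ℤ × Fin n), (⇑E)^[2] z = E (E z) :=
      fun E z => rfl
    rw [h2]
    refine Prod.ext_iff.mpr ⟨?_, ?_⟩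
    · simp only [Equiv.coe_fn_mk]
      try dsimp only
      try simp only [Fin.val_mk]
      push_cast
      omega
    · simp only [Equiv.coe_fn_mk]
      try dsimp only
      apply Fin.ext
      try simp only [Fin.val_mk]
      omega

/-- For a (connected) Dynkin quiver `Q` and `a ≥ 2`, the repetition quiver
`ℤQ` has a combinatorial `a`-th root of the AR translation `τ` — an automorphism
(arrow-preserving bijection commuting with `τ : (p,v) ↦ (p−1,v)`) whose `a`-th power is
`τ⁻¹` — iff `a = 2` and `Q` is of type `A_n` with `n` even. -/
theorem dynkin_root_of_tau_classification (Δ : DynkinType) (hΔ : Δ.Valid)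
    (a : ℕ) (ha : 2 ≤ a) :
    (∃ e : (ℤ × Fin Δ.card) ≃ (ℤ × Fin Δ.card),
      (∀ z w, zqAdj Δ.arrow z w ↔ zqAdj Δ.arrow (e z) (e w)) ∧
      (∀ z : ℤ × Fin Δ.card, e (z.1 - 1, z.2) = ((e z).1 - 1, (e z).2)) ∧
      (∀ z : ℤ × Fin Δ.card, e^[a] z = (z.1 + 1, z.2)))
    ↔ (a = 2 ∧ ∃ n : ℕ, Even n ∧ Δ = DynkinType.A n) := by
  constructor
  · rintro ⟨e, hadj, htau, hpow⟩
    obtain ⟨σ, g, hinj, harr, hfix, hsum⟩ := zq_root_extract Δ.arrow a e hadj htau hpow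
    have noFix : ∀ v, σ v ≠ v := by
      intro v hv
      have h := hsum v
      have hit : ∀ i, σ^[i] v = v := fun i => Function.iterate_fixed hv i
      simp only [hit] at h
      rw [Finset.sum_const, Finset.card_range, nsmul_eq_mul] at h
      have hdvd : (a : ℤ) ∣ 1 := ⟨g v, h.symm⟩
      have := Int.le_of_dvd one_pos hdvd
      omega
    cases Δ with
    | A n =>
      have hn : 1 ≤ n := hΔ
      obtain ⟨ha2, hev⟩ := A_case n a hn ha σ g hinj harr hfix hsum noFix
      exact ⟨ha2, n, hev, rfl⟩
    | D n =>
      exfalso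
      have hn : 4 ≤ n := hΔ
      exact noFix _ (D_fix n hn σ hinj harr)
    | E6 =>
      exfalso
      exact noFix _ (E_fix 6 4 5 (by omega) rfl rfl σ hinj harr)
    | E7 =>
      exfalso
      exact noFix _ (E_fix 7 5 6 (by omega) rfl rfl σ hinj harr)
    | E8 =>
      exfalso
      exact noFix _ (E_fix 8 6 7 (by omega) rfl rfl σ hinj harr)
  · rintro ⟨rfl, n, hev, rfl⟩
    have hn : 1 ≤ n := hΔ
    obtain ⟨m, hm⟩ := hev
    have hm1 : 1 ≤ m := by omega
    exact A_back n m hn hm hm1
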